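/- arXiv:2309.06429 — 5 statements merged into one kernel-verified Lean document; each statement's English description precedes it below -/
import Mathlib

section
/- Weak duality and primal–dual relation for the debiasing program: fix integers n, d ≥ 1, vectors X₁,…,Xₙ, x ∈ ℝ^d, reals π̂₁,…,π̂ₙ ≥ 0 and γ > 0. (i) For every w ∈ ℝⁿ feasible for the primal debiasing program and every ℓ ∈ ℝ^d, Σᵢ₌₁ⁿ π̂ᵢwᵢ² ≥ −[(1/(4n))Σᵢ₌₁ⁿ π̂ᵢ(Xᵢᵀℓ)² + xᵀℓ + (γ/n)‖ℓ‖₁]. (ii) If in addition π̂ᵢ > 0 for all i, strong duality holds in the sense that the infimum of Σᵢ₌₁ⁿ π̂ᵢwᵢ² over feasible w equals −inf_{ℓ∈ℝ^d}[(1/(4n))Σᵢ₌₁ⁿ π̂ᵢ(Xᵢᵀℓ)² + xᵀℓ + (γ/n)‖ℓ‖₁], ŵ is a feasible minimizer of the primal program, and ℓ̂ is a minimizer of the dual objective, then ŵᵢ = −(1/(2√n))·Xᵢᵀℓ̂ for every i = 1,…,n. -/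
open MeasureTheory ProbabilityTheory Filter Finset Asymptotics
open scoped ENNReal NNReal Topology Classical

noncomputable section

/-- Euclidean dot product on `ℝ^m`. -/
def dot {m : ℕ} (u v : Fin m → ℝ) : ℝ := ∑ j, u j * v j

/-- ℓ¹-norm on `ℝ^m`. -/
def l1 {m : ℕ} (v : Fin m → ℝ) : ℝ := ∑ j, |v j|

/-- ℓ²-norm on `ℝ^m`. -/
def l2 {m : ℕ} (v : Fin m → ℝ) : ℝ := Real.sqrt (∑ j, v j ^ 2)

/-- max-norm on `ℝ^m`. -/
def linf {m : ℕ} (v : Fin m → ℝ) : ℝ := ⨆ j, |v j|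

/-- number of nonzero coordinates. -/
def l0 {m : ℕ} (v : Fin m → ℝ) : ℕ := (Finset.univ.filter fun j => v j ≠ 0).card

/-- coordinate restriction of a vector to an index set. -/
def restr {m : ℕ} (S : Finset (Fin m)) (v : Fin m → ℝ) : Fin m → ℝ :=
  fun j => if j ∈ S then v j else 0

/-- cone of dominant coordinates w.r.t. the ℓ¹-norm. -/
def cone1 {m : ℕ} (S : Finset (Fin m)) (t : ℝ) : Set (Fin m → ℝ) :=
  {v | l1 (restr Sᶜ v) ≤ t * l1 (restr S v)}

/-- cone of dominant coordinates w.r.t. the ℓ²-norm. -/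
def cone2 {m : ℕ} (S : Finset (Fin m)) (t : ℝ) : Set (Fin m → ℝ) :=
  {v | l2 (restr Sᶜ v) ≤ t * l2 (restr S v)}

/-- ψ_a-Orlicz norm of a real random variable (with `sInf ∅ = ∞`). -/
def psiNorm {Ω : Type*} [MeasurableSpace Ω] (a : ℝ) (μ : Measure Ω) (Z : Ω → ℝ) : ℝ≥0∞ :=
  sInf {t : ℝ≥0∞ | 0 < t ∧ t ≠ ∞ ∧
    ∫⁻ ω, ENNReal.ofReal (Real.exp (|Z ω| ^ a / t.toReal ^ a)) ∂μ ≤ 2}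

/-- sub-Gaussian random vector with constant `K`. -/
def SubGaussian {Ω : Type*} [MeasurableSpace Ω] {m : ℕ} (μ : Measure Ω)
    (X : Ω → Fin m → ℝ) (K : ℝ) : Prop :=
  ∀ u : Fin m → ℝ,
    psiNorm 2 μ (fun ω => dot u (X ω)) ≤
      ENNReal.ofReal (K * Real.sqrt (∫ ω, dot u (X ω) ^ 2 ∂μ))

/-- `s`-sparse maximum eigenvalue of `E[X Xᵀ]`. -/
def sparseEig {Ω : Type*} [MeasurableSpace Ω] {m : ℕ} (μ : Measure Ω)
    (X : Ω → Fin m → ℝ) (s : ℕ) : ℝ :=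
  sSup {r : ℝ | ∃ u : Fin m → ℝ, l2 u = 1 ∧ l0 u ≤ s ∧ r = ∫ ω, dot (X ω) u ^ 2 ∂μ}

/-- complete-case population gram matrix `E[R X Xᵀ]`. -/
def gramCC {Ω : Type*} [MeasurableSpace Ω] {m : ℕ} (μ : Measure Ω)
    (R : Ω → ℝ) (X : Ω → Fin m → ℝ) : Matrix (Fin m) (Fin m) ℝ :=
  Matrix.of fun j k => ∫ ω, R ω * X ω j * X ω k ∂μ

/-- feasibility for the primal debiasing program. -/
def Feasible (n d : ℕ) (X : Fin n → Fin d → ℝ) (x : Fin d → ℝ)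
    (piHat : Fin n → ℝ) (γ : ℝ) (w : Fin n → ℝ) : Prop :=
  linf (fun j => x j - (1 / Real.sqrt n) * ∑ i, w i * piHat i * X i j) ≤ γ / n

/-- primal objective of the debiasing program. -/
def primalObj (n : ℕ) (piHat : Fin n → ℝ) (w : Fin n → ℝ) : ℝ := ∑ i, piHat i * w i ^ 2

/-- dual objective of the debiasing program. -/
def dualObj (n d : ℕ) (X : Fin n → Fin d → ℝ) (x : Fin d → ℝ)
    (piHat : Fin n → ℝ) (γ : ℝ) (ℓ : Fin d → ℝ) : ℝ :=
  (1 / (4 * n)) * ∑ i, piHat i * dot (X i) ℓ ^ 2 + dot x ℓ + (γ / n) * l1 ℓ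

lemma abs_le_of_linf_le {d : ℕ} (hd : 1 ≤ d) (v : Fin d → ℝ) (c : ℝ)
    (h : linf v ≤ c) (j : Fin d) : |v j| ≤ c := by
  have hne : Nonempty (Fin d) := ⟨⟨0, hd⟩⟩
  simp only [linf] at h
  exact le_trans (le_ciSup (f := fun k => |v k|) (Set.Finite.bddAbove (Set.finite_range _)) j) h

lemma key_ineq (n d : ℕ) (hn : 1 ≤ n) (hd : 1 ≤ d)
    (X : Fin n → Fin d → ℝ) (x : Fin d → ℝ) (piHat : Fin n → ℝ) (γ : ℝ)
    (hpi : ∀ i, 0 ≤ piHat i)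
    (w : Fin n → ℝ) (hw : Feasible n d X x piHat γ w) (ℓ : Fin d → ℝ) :
    ∑ i, piHat i * (w i + (1 / (2 * Real.sqrt n)) * dot (X i) ℓ) ^ 2 ≤
      primalObj n piHat w + dualObj n d X x piHat γ ℓ := by
  have hn0 : (0:ℝ) < n := by exact_mod_cast hn
  set s := Real.sqrt n with hsdef
  have hs : 0 < s := Real.sqrt_pos.mpr hn0
  have hs2 : s * s = n := Real.mul_self_sqrt hn0.le
  set e : Fin d → ℝ := fun j => x j - (1 / s) * ∑ i, w i * piHat i * X i j with he
  have hej : ∀ j, |e j| ≤ γ / n := fun j => abs_le_of_linf_le hd e (γ / n) hw j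
  -- expansion
  have hexp : ∀ i, piHat i * (w i + (1 / (2 * s)) * dot (X i) ℓ) ^ 2
      = piHat i * w i ^ 2 + (1 / s) * (piHat i * w i * dot (X i) ℓ)
        + (1 / (4 * (n:ℝ))) * (piHat i * dot (X i) ℓ ^ 2) := by
    intro i
    rw [← hs2]
    field_simp
    ring
  have hsum : ∑ i, piHat i * (w i + (1 / (2 * s)) * dot (X i) ℓ) ^ 2
      = primalObj n piHat w + (1 / s) * ∑ i, piHat i * w i * dot (X i) ℓ
        + (1 / (4 * (n:ℝ))) * ∑ i, piHat i * dot (X i) ℓ ^ 2 := by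
    simp only [hexp, Finset.sum_add_distrib, ← Finset.mul_sum, primalObj]
  rw [hsum, dualObj]
  have hswap : (1 / s) * ∑ i, piHat i * w i * dot (X i) ℓ
      = ∑ j, (x j - e j) * ℓ j := by
    have h1 : ∀ j, (x j - e j) * ℓ j = ∑ i, (1 / s) * (w i * piHat i * X i j * ℓ j) := by
      intro j
      simp only [he]
      rw [← Finset.mul_sum, ← Finset.sum_mul]
      ring
    simp only [h1]
    rw [Finset.sum_comm, Finset.mul_sum]
    refine Finset.sum_congr rfl fun i _ => ?_
    simp only [dot, Finset.mul_sum]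
    refine Finset.sum_congr rfl fun j _ => ?_
    ring
  rw [hswap]
  have hbound : ∑ j, (x j - e j) * ℓ j ≤ dot x ℓ + (γ / n) * l1 ℓ := by
    have : ∀ j ∈ Finset.univ, (x j - e j) * ℓ j ≤ x j * ℓ j + (γ / n) * |ℓ j| := by
      intro j _
      have h1 : -(e j * ℓ j) ≤ |e j| * |ℓ j| := by
        calc -(e j * ℓ j) ≤ |e j * ℓ j| := neg_le_abs _
          _ = |e j| * |ℓ j| := abs_mul _ _
      have h2 : |e j| * |ℓ j| ≤ (γ / n) * |ℓ j| :=
        mul_le_mul_of_nonneg_right (hej j) (abs_nonneg _)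
      have h3 : (x j - e j) * ℓ j = x j * ℓ j + -(e j * ℓ j) := by ring
      rw [h3]
      have h4 := le_trans h1 h2
      linarith
    calc ∑ j, (x j - e j) * ℓ j ≤ ∑ j, (x j * ℓ j + (γ / n) * |ℓ j|) :=
          Finset.sum_le_sum this
      _ = dot x ℓ + (γ / n) * l1 ℓ := by
          rw [Finset.sum_add_distrib, ← Finset.mul_sum]; rfl
  linarith

/-- weak duality and the primal–dual relation for the debiasing program. -/
theorem weak_duality_and_primal_dual_relation
    (n d : ℕ) (hn : 1 ≤ n) (hd : 1 ≤ d)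
    (X : Fin n → Fin d → ℝ) (x : Fin d → ℝ) (piHat : Fin n → ℝ) (γ : ℝ)
    (hpi : ∀ i, 0 ≤ piHat i) (hγ : 0 < γ) :
    (∀ w : Fin n → ℝ, Feasible n d X x piHat γ w → ∀ ℓ : Fin d → ℝ,
        -(dualObj n d X x piHat γ ℓ) ≤ primalObj n piHat w) ∧
    ((∀ i, 0 < piHat i) →
      ∀ (wHat : Fin n → ℝ) (ℓHat : Fin d → ℝ),
        sInf {v : ℝ | ∃ w, Feasible n d X x piHat γ w ∧ v = primalObj n piHat w}
          = -sInf (Set.range (dualObj n d X x piHat γ)) →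
        Feasible n d X x piHat γ wHat →
        (∀ w, Feasible n d X x piHat γ w → primalObj n piHat wHat ≤ primalObj n piHat w) →
        (∀ ℓ, dualObj n d X x piHat γ ℓHat ≤ dualObj n d X x piHat γ ℓ) →
        ∀ i, wHat i = -(1 / (2 * Real.sqrt n)) * dot (X i) ℓHat) := by
  have hn0 : (0:ℝ) < n := by exact_mod_cast hn
  have hs : 0 < Real.sqrt n := Real.sqrt_pos.mpr hn0
  constructor
  · intro w hw ℓ
    have hk := key_ineq n d hn hd X x piHat γ hpi w hw ℓ
    have hnn : 0 ≤ ∑ i, piHat i * (w i + (1 / (2 * Real.sqrt n)) * dot (X i) ℓ) ^ 2 :=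
      Finset.sum_nonneg fun i _ => mul_nonneg (hpi i) (sq_nonneg _)
    linarith
  · intro hpi' wHat ℓHat hstrong hfeas hmin hdmin
    -- identify the two infima
    have hPset : sInf {v : ℝ | ∃ w, Feasible n d X x piHat γ w ∧ v = primalObj n piHat w}
        = primalObj n piHat wHat := by
      apply le_antisymm
      · exact csInf_le ⟨primalObj n piHat wHat, fun v ⟨w, hw, hv⟩ => hv ▸ hmin w hw⟩
          ⟨wHat, hfeas, rfl⟩
      · exact le_csInf ⟨primalObj n piHat wHat, wHat, hfeas, rfl⟩
          fun v ⟨w, hw, hv⟩ => hv ▸ hmin w hw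
    have hDset : sInf (Set.range (dualObj n d X x piHat γ)) = dualObj n d X x piHat γ ℓHat := by
      apply le_antisymm
      · exact csInf_le ⟨dualObj n d X x piHat γ ℓHat,
          fun v ⟨ℓ, hℓ⟩ => hℓ ▸ hdmin ℓ⟩ ⟨ℓHat, rfl⟩
      · exact le_csInf ⟨dualObj n d X x piHat γ ℓHat, ℓHat, rfl⟩
          fun v ⟨ℓ, hℓ⟩ => hℓ ▸ hdmin ℓ
    have heq : primalObj n piHat wHat + dualObj n d X x piHat γ ℓHat = 0 := by
      rw [hPset, hDset] at hstrong; linarith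
    have hk := key_ineq n d hn hd X x piHat γ hpi wHat hfeas ℓHat
    have hz : ∀ i ∈ Finset.univ,
        piHat i * (wHat i + (1 / (2 * Real.sqrt n)) * dot (X i) ℓHat) ^ 2 = 0 := by
      have hnn : ∀ i ∈ Finset.univ,
          0 ≤ piHat i * (wHat i + (1 / (2 * Real.sqrt n)) * dot (X i) ℓHat) ^ 2 :=
        fun i _ => mul_nonneg (hpi i) (sq_nonneg _)
      have hle : ∑ i, piHat i * (wHat i + (1 / (2 * Real.sqrt n)) * dot (X i) ℓHat) ^ 2 ≤ 0 := by
        linarith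
      have := Finset.sum_nonneg hnn
      intro i hi
      exact le_antisymm (by
        by_contra hcon
        push_neg at hcon
        have := Finset.single_le_sum hnn hi
        nlinarith [hle]) (hnn i hi)
    intro i
    have h0 := hz i (Finset.mem_univ i)
    have hpi0 := hpi' i
    have hsq : (wHat i + (1 / (2 * Real.sqrt n)) * dot (X i) ℓHat) ^ 2 = 0 := by
      rcases mul_eq_zero.mp h0 with h | h
      · exact absurd h (ne_of_gt hpi0)
      · exact h
    have := pow_eq_zero_iff (n := 2) (by norm_num) |>.mp hsq
    linarith
end
end

section
/- Sparse approximation of Mx under columnwise cone structure and a singular-value condition (Lemma D.1(b)): let d ≥ 1, M ∈ ℝ^{d×d}, J ⊆ {1,…,d} nonempty, and ϑ ≥ 0, and suppose every column M_{·,k} (k = 1,…,d) belongs to the cone C₁(J,ϑ). Let x ∈ ℝ^d be a nonzero vector with support S_x of cardinality s_x, and suppose the submatrix M_{J,S_x} has smallest singular value σ_min(M_{J,S_x}) > 0. Set K_{J,x} := max_{k∈S_x} √(s_x)·‖M_{J,k}‖₁/σ_min(M_{J,S_x}). Then Mx ∈ C₁(J, (1+ϑ)·K_{J,x}), and for every integer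 s ≥ 1 there exists ℓ̃ ∈ ℝ^d with at most s nonzero coordinates such that ‖ℓ̃ − Mx‖₂ ≤ ((1 + (1+ϑ)·K_{J,x})/2)·√(|J|/s)·‖Mx‖₂. -/
open MeasureTheory ProbabilityTheory Filter Finset Asymptotics
open scoped ENNReal NNReal Topology Classical

noncomputable section

lemma l1_restr {m : ℕ} (S : Finset (Fin m)) (v : Fin m → ℝ) :
    l1 (restr S v) = ∑ j ∈ S, |v j| := by
  rw [l1, ← Finset.sum_subset (Finset.subset_univ S)]
  · exact Finset.sum_congr rfl fun j hj => by simp [restr, hj]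
  · intro j _ hj; simp [restr, hj]

lemma l2_sq {m : ℕ} (v : Fin m → ℝ) : l2 v ^ 2 = ∑ j, v j ^ 2 :=
  Real.sq_sqrt (Finset.sum_nonneg fun j _ => sq_nonneg _)

lemma l2_nonneg {m : ℕ} (v : Fin m → ℝ) : 0 ≤ l2 v := Real.sqrt_nonneg _

lemma l1_nonneg {m : ℕ} (v : Fin m → ℝ) : 0 ≤ l1 v :=
  Finset.sum_nonneg fun j _ => abs_nonneg _

lemma l2_restr_sq {m : ℕ} (S : Finset (Fin m)) (v : Fin m → ℝ) :
    l2 (restr S v) = Real.sqrt (∑ j ∈ S, v j ^ 2) := by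
  rw [l2, ← Finset.sum_subset (Finset.subset_univ S)]
  · congr 1; exact Finset.sum_congr rfl fun j hj => by simp [restr, hj]
  · intro j _ hj; simp [restr, hj]

lemma l2_le_l1 {m : ℕ} (v : Fin m → ℝ) : l2 v ≤ l1 v := by
  rw [l2, l1]
  have h : ∑ j, v j ^ 2 ≤ (∑ j, |v j|) ^ 2 := by
    calc ∑ j, v j ^ 2 = ∑ j, |v j| ^ 2 := by simp [sq_abs]
    _ ≤ _ := Finset.sum_sq_le_sq_sum_of_nonneg fun j _ => abs_nonneg _
  calc Real.sqrt (∑ j, v j ^ 2) ≤ Real.sqrt ((∑ j, |v j|) ^ 2) := Real.sqrt_le_sqrt h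
  _ = ∑ j, |v j| := Real.sqrt_sq (Finset.sum_nonneg fun j _ => abs_nonneg _)

lemma l2_smul {m : ℕ} (c : ℝ) (v : Fin m → ℝ) : l2 (fun j => c * v j) = |c| * l2 v := by
  rw [l2, l2]
  simp_rw [mul_pow, ← Finset.mul_sum, Real.sqrt_mul (sq_nonneg c), Real.sqrt_sq_eq_abs]

lemma l1_split {m : ℕ} (S : Finset (Fin m)) (v : Fin m → ℝ) :
    l1 v = l1 (restr S v) + l1 (restr Sᶜ v) := by
  rw [l1, l1_restr, l1_restr, ← Finset.sum_add_sum_compl S]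

lemma l1_le_sqrt_card_mul_l2 {m : ℕ} (S : Finset (Fin m)) (v : Fin m → ℝ) :
    ∑ j ∈ S, |v j| ≤ Real.sqrt (S.card : ℝ) * l2 v := by
  have h := Real.sum_mul_le_sqrt_mul_sqrt S (fun _ => (1:ℝ)) (fun j => |v j|)
  simp only [one_mul, one_pow, Finset.sum_const, nsmul_eq_mul, mul_one, sq_abs] at h
  refine h.trans (mul_le_mul_of_nonneg_left ?_ (Real.sqrt_nonneg _))
  rw [l2]
  exact Real.sqrt_le_sqrt (Finset.sum_le_sum_of_subset_of_nonneg (Finset.subset_univ S)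
    (fun j _ _ => sq_nonneg _))

lemma stechkin {m : ℕ} (v : Fin m → ℝ) (s : ℕ) (hs : 1 ≤ s) :
    ∃ ℓt : Fin m → ℝ, l0 ℓt ≤ s ∧
      l2 (fun j => ℓt j - v j) ≤ l1 v / (2 * Real.sqrt (s : ℝ)) := by
  have hspos : (0:ℝ) < Real.sqrt s := Real.sqrt_pos.2 (by exact_mod_cast hs)
  by_cases hms : m ≤ s
  · refine ⟨v, ?_, ?_⟩
    · calc l0 v ≤ (Finset.univ : Finset (Fin m)).card := Finset.card_filter_le _ _
      _ = m := by simp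
      _ ≤ s := hms
    · have : (fun j => v j - v j) = fun _ : Fin m => (0:ℝ) := by funext j; ring
      rw [this]
      have : l2 (fun _ : Fin m => (0:ℝ)) = 0 := by simp [l2]
      rw [this]
      exact div_nonneg (l1_nonneg v) (by positivity)
  · push_neg at hms
    have hsd : s ≤ (Finset.univ : Finset (Fin m)).card := by simp; omega
    obtain ⟨T, hT, hTmax⟩ := (Finset.univ.powersetCard s).exists_max_image
      (fun T => ∑ i ∈ T, |v i|) (Finset.powersetCard_nonempty.2 hsd)
    have hTcard : T.card = s := (Finset.mem_powersetCard.1 hT).2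
    set A := ∑ i ∈ T, |v i| with hA
    set B := ∑ i ∈ Tᶜ, |v i| with hB
    have hAB : A + B = l1 v := by rw [hA, hB, l1, Finset.sum_add_sum_compl]
    have hA0 : 0 ≤ A := Finset.sum_nonneg fun i _ => abs_nonneg _
    have hB0 : 0 ≤ B := Finset.sum_nonneg fun i _ => abs_nonneg _
    -- swap argument: for j ∉ T, i ∈ T, |v j| ≤ |v i|
    have hswap : ∀ j ∉ T, ∀ i ∈ T, |v j| ≤ |v i| := by
      intro j hj i hi
      have hjei : j ∉ T.erase i := fun h => hj (Finset.mem_of_mem_erase h)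
      have hT' : insert j (T.erase i) ∈ Finset.univ.powersetCard s := by
        rw [Finset.mem_powersetCard]
        refine ⟨Finset.subset_univ _, ?_⟩
        rw [Finset.card_insert_of_notMem hjei, Finset.card_erase_of_mem hi, hTcard]
        omega
      have h1 := hTmax _ hT'
      rw [Finset.sum_insert hjei] at h1
      have h2 : |v i| + ∑ x ∈ T.erase i, |v x| = ∑ x ∈ T, |v x| :=
        Finset.add_sum_erase T (fun x => |v x|) hi
      rw [← hA] at h2
      linarith
    have hkey : ∀ j ∉ T, (s:ℝ) * |v j| ≤ A := by
      intro j hj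
      calc (s:ℝ) * |v j| = ∑ _i ∈ T, |v j| := by
            rw [Finset.sum_const, hTcard, nsmul_eq_mul]
      _ ≤ A := Finset.sum_le_sum fun i hi => hswap j hj i hi
    refine ⟨restr T v, ?_, ?_⟩
    · rw [← hTcard]
      apply Finset.card_le_card
      intro j hj
      simp only [Finset.mem_filter, restr] at hj
      by_contra h
      simp [h] at hj
    · have herr : (fun j => restr T v j - v j) = restr Tᶜ (fun j => -v j) := by
        funext j
        by_cases hj : j ∈ T <;> simp [restr, hj]
      rw [herr, l2_restr_sq]
      have hsq : ∑ j ∈ Tᶜ, (-v j) ^ 2 ≤ (l1 v)^2 / (4 * s) := by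
        have h1 : ∑ j ∈ Tᶜ, (-v j) ^ 2 ≤ (A / s) * B := by
          rw [hB, Finset.mul_sum]
          refine Finset.sum_le_sum fun j hj => ?_
          have hj' : j ∉ T := Finset.mem_compl.1 hj
          have h2 := hkey j hj'
          have hspos' : (0:ℝ) < s := by exact_mod_cast hs
          have : (-v j)^2 = |v j| * |v j| := by rw [← abs_neg, ← sq_abs]; ring
          rw [this]
          have hvj : |v j| ≤ A / s := by rw [le_div_iff₀ hspos']; linarith
          exact mul_le_mul_of_nonneg_right hvj (abs_nonneg _)
        have h3 : A * B ≤ ((A + B)/2)^2 := by nlinarith [sq_nonneg (A - B)]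
        have hspos' : (0:ℝ) < s := by exact_mod_cast hs
        calc ∑ j ∈ Tᶜ, (-v j) ^ 2 ≤ (A / s) * B := h1
        _ = A * B / s := by ring
        _ ≤ ((A+B)/2)^2 / s := by gcongr
        _ = (l1 v)^2 / (4 * s) := by rw [hAB]; ring
      calc Real.sqrt (∑ j ∈ Tᶜ, (-v j) ^ 2) ≤ Real.sqrt ((l1 v)^2 / (4*s)) :=
            Real.sqrt_le_sqrt hsq
      _ = l1 v / (2 * Real.sqrt s) := by
          rw [show (l1 v)^2 / (4*(s:ℝ)) = (l1 v / (2 * Real.sqrt s))^2 by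
            rw [div_pow, mul_pow, Real.sq_sqrt (by positivity : (0:ℝ) ≤ (s:ℝ))]; ring]
          exact Real.sqrt_sq (div_nonneg (l1_nonneg v) (by positivity))

/-- sparse approximation of `Mx` under columnwise cone structure and a
singular-value condition. -/
theorem sparse_approx_singular_value
    (d : ℕ) (hd : 1 ≤ d) (M : Matrix (Fin d) (Fin d) ℝ)
    (J : Finset (Fin d)) (hJ : J.Nonempty) (ϑ : ℝ) (hϑ : 0 ≤ ϑ)
    (hcols : ∀ k, (fun j => M j k) ∈ cone1 J ϑ)
    (x : Fin d → ℝ) (hx : x ≠ 0)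
    (Sx : Finset (Fin d)) (hSx : Sx = Finset.univ.filter fun j => x j ≠ 0)
    (sx : ℕ) (hsx : sx = Sx.card)
    (σmin : ℝ)
    (hσ : σmin = sInf {c : ℝ | ∃ u : Fin d → ℝ, (∀ j ∉ Sx, u j = 0) ∧ l2 u = 1 ∧
        c = l2 (restr J (M.mulVec u))})
    (hσpos : 0 < σmin)
    (KJx : ℝ)
    (hK : KJx = sSup {c : ℝ | ∃ k ∈ Sx,
        c = Real.sqrt (sx : ℝ) * (∑ j ∈ J, |M j k|) / σmin}) :
    M.mulVec x ∈ cone1 J ((1 + ϑ) * KJx) ∧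
    ∀ s : ℕ, 1 ≤ s → ∃ ℓt : Fin d → ℝ, l0 ℓt ≤ s ∧
      l2 (fun j => ℓt j - M.mulVec x j)
        ≤ ((1 + (1 + ϑ) * KJx) / 2) * Real.sqrt ((J.card : ℝ) / (s : ℝ)) * l2 (M.mulVec x) := by
  classical
  set v := M.mulVec x with hv
  -- basic facts
  obtain ⟨k₀, hk₀⟩ : ∃ k, x k ≠ 0 := Function.ne_iff.1 hx
  have hk₀Sx : k₀ ∈ Sx := by rw [hSx]; simp [hk₀]
  have hSxne : Sx.Nonempty := ⟨k₀, hk₀Sx⟩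
  have hsx1 : 1 ≤ sx := by rw [hsx]; exact Finset.card_pos.2 hSxne
  have hsxpos : (0:ℝ) < Real.sqrt (sx:ℝ) := Real.sqrt_pos.2 (by exact_mod_cast hsx1)
  have hl2x : 0 < l2 x := by
    rw [l2]
    apply Real.sqrt_pos.2
    have : (x k₀)^2 ≤ ∑ j, x j ^ 2 :=
      Finset.single_le_sum (f := fun j => x j ^ 2) (fun j _ => sq_nonneg _) (Finset.mem_univ k₀)
    nlinarith [sq_nonneg (x k₀), pow_pos (abs_pos.2 hk₀) 2, sq_abs (x k₀)]
  -- σmin * l2 x ≤ l2 (restr J v)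
  have hσle : σmin * l2 x ≤ l2 (restr J v) := by
    set u : Fin d → ℝ := fun j => (l2 x)⁻¹ * x j with hu
    have hu0 : ∀ j ∉ Sx, u j = 0 := by
      intro j hj
      have : ¬ x j ≠ 0 := by
        intro h; exact hj (by rw [hSx]; simp [h])
      simp [hu, not_not.1 this]
    have hul2 : l2 u = 1 := by
      rw [hu, l2_smul, abs_of_nonneg (inv_nonneg.2 hl2x.le), inv_mul_cancel₀ hl2x.ne']
    have hMu : M.mulVec u = fun j => (l2 x)⁻¹ * v j := by
      funext j
      rw [hv]
      simp only [Matrix.mulVec, dotProduct, hu, Finset.mul_sum]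
      exact Finset.sum_congr rfl fun k _ => by ring
    have hrestr : restr J (M.mulVec u) = fun j => (l2 x)⁻¹ * restr J v j := by
      funext j
      rw [hMu]
      by_cases hj : j ∈ J <;> simp [restr, hj]
    have hval : l2 (restr J (M.mulVec u)) = (l2 x)⁻¹ * l2 (restr J v) := by
      rw [hrestr, l2_smul, abs_of_nonneg (inv_nonneg.2 hl2x.le)]
    have hmem : (l2 x)⁻¹ * l2 (restr J v) ∈ {c : ℝ | ∃ u : Fin d → ℝ,
        (∀ j ∉ Sx, u j = 0) ∧ l2 u = 1 ∧ c = l2 (restr J (M.mulVec u))} :=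
      ⟨u, hu0, hul2, hval.symm⟩
    have hbdd : BddBelow {c : ℝ | ∃ u : Fin d → ℝ, (∀ j ∉ Sx, u j = 0) ∧ l2 u = 1 ∧
        c = l2 (restr J (M.mulVec u))} :=
      ⟨0, fun c ⟨w, _, _, hc⟩ => hc ▸ l2_nonneg _⟩
    have := hσ ▸ csInf_le hbdd hmem
    calc σmin * l2 x ≤ ((l2 x)⁻¹ * l2 (restr J v)) * l2 x :=
          mul_le_mul_of_nonneg_right this hl2x.le
    _ = l2 (restr J v) := by field_simp
  -- KJx bounds
  have hKset : {c : ℝ | ∃ k ∈ Sx, c = Real.sqrt (sx : ℝ) * (∑ j ∈ J, |M j k|) / σmin}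
      = (fun k => Real.sqrt (sx : ℝ) * (∑ j ∈ J, |M j k|) / σmin) '' ↑Sx := by
    ext c
    constructor
    · rintro ⟨k, hk, rfl⟩; exact ⟨k, hk, rfl⟩
    · rintro ⟨k, hk, rfl⟩; exact ⟨k, hk, rfl⟩
  have hKbdd : BddAbove {c : ℝ | ∃ k ∈ Sx,
      c = Real.sqrt (sx : ℝ) * (∑ j ∈ J, |M j k|) / σmin} := by
    rw [hKset]; exact (Sx.finite_toSet.image _).bddAbove
  have hKge : ∀ k ∈ Sx, Real.sqrt (sx : ℝ) * (∑ j ∈ J, |M j k|) / σmin ≤ KJx := by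
    intro k hk
    rw [hK]
    exact le_csSup hKbdd ⟨k, hk, rfl⟩
  have hK0 : 0 ≤ KJx := by
    refine le_trans ?_ (hKge k₀ hk₀Sx)
    positivity
  have hAle : ∀ k ∈ Sx, (∑ j ∈ J, |M j k|) ≤ KJx * σmin / Real.sqrt (sx:ℝ) := by
    intro k hk
    have := hKge k hk
    rw [div_le_iff₀ hσpos] at this
    rw [le_div_iff₀ hsxpos]
    nlinarith
  -- part 1 : cone membership
  have hl1Jv : 0 ≤ l1 (restr J v) := l1_nonneg _
  have hcone : l1 (restr Jᶜ v) ≤ ϑ * KJx * l1 (restr J v) := by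
    have step1 : l1 (restr Jᶜ v) ≤ ∑ k ∈ Sx, |x k| * (ϑ * ∑ j ∈ J, |M j k|) := by
      rw [l1_restr]
      have h1 : ∀ j, |v j| ≤ ∑ k, |M j k| * |x k| := by
        intro j
        rw [hv]
        calc |∑ k, M j k * x k| ≤ ∑ k, |M j k * x k| := Finset.abs_sum_le_sum_abs _ _
        _ = ∑ k, |M j k| * |x k| := by simp [abs_mul]
      calc ∑ j ∈ Jᶜ, |v j| ≤ ∑ j ∈ Jᶜ, ∑ k, |M j k| * |x k| :=
            Finset.sum_le_sum fun j _ => h1 j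
      _ = ∑ k, |x k| * ∑ j ∈ Jᶜ, |M j k| := by
            rw [Finset.sum_comm]
            refine Finset.sum_congr rfl fun k _ => ?_
            rw [Finset.mul_sum]
            exact Finset.sum_congr rfl fun j _ => by ring
      _ = ∑ k ∈ Sx, |x k| * ∑ j ∈ Jᶜ, |M j k| := by
            symm
            apply Finset.sum_subset (Finset.subset_univ Sx)
            intro k _ hk
            have : x k = 0 := by
              by_contra h
              exact hk (by rw [hSx]; simp [h])
            simp [this]
      _ ≤ ∑ k ∈ Sx, |x k| * (ϑ * ∑ j ∈ J, |M j k|) := by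
            refine Finset.sum_le_sum fun k _ => ?_
            refine mul_le_mul_of_nonneg_left ?_ (abs_nonneg _)
            have := hcols k
            rwa [cone1, Set.mem_setOf_eq, l1_restr, l1_restr] at this
    have step2 : ∑ k ∈ Sx, |x k| * (ϑ * ∑ j ∈ J, |M j k|)
        ≤ ϑ * (KJx * σmin / Real.sqrt (sx:ℝ)) * ∑ k ∈ Sx, |x k| := by
      rw [Finset.mul_sum]
      refine Finset.sum_le_sum fun k hk => ?_
      have h2 := hAle k hk
      have h3 : 0 ≤ |x k| := abs_nonneg _
      have h4 : 0 ≤ ϑ * ∑ j ∈ J, |M j k| := by positivity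
      calc |x k| * (ϑ * ∑ j ∈ J, |M j k|)
          ≤ |x k| * (ϑ * (KJx * σmin / Real.sqrt (sx:ℝ))) := by
            refine mul_le_mul_of_nonneg_left ?_ h3
            exact mul_le_mul_of_nonneg_left h2 hϑ
      _ = ϑ * (KJx * σmin / Real.sqrt (sx:ℝ)) * |x k| := by ring
    have step3 : ∑ k ∈ Sx, |x k| ≤ Real.sqrt (sx:ℝ) * l2 x := by
      have := l1_le_sqrt_card_mul_l2 Sx x
      rwa [← hsx] at this
    have step4 : l2 (restr J v) ≤ l1 (restr J v) := l2_le_l1 _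
    have hc : 0 ≤ ϑ * (KJx * σmin / Real.sqrt (sx:ℝ)) := by positivity
    calc l1 (restr Jᶜ v) ≤ ϑ * (KJx * σmin / Real.sqrt (sx:ℝ)) * ∑ k ∈ Sx, |x k| :=
          step1.trans step2
    _ ≤ ϑ * (KJx * σmin / Real.sqrt (sx:ℝ)) * (Real.sqrt (sx:ℝ) * l2 x) :=
          mul_le_mul_of_nonneg_left step3 hc
    _ = ϑ * KJx * (σmin * l2 x) := by field_simp
    _ ≤ ϑ * KJx * l2 (restr J v) :=
          mul_le_mul_of_nonneg_left hσle (by positivity)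
    _ ≤ ϑ * KJx * l1 (restr J v) :=
          mul_le_mul_of_nonneg_left step4 (by positivity)
  have hconemem : v ∈ cone1 J ((1 + ϑ) * KJx) := by
    rw [cone1, Set.mem_setOf_eq]
    refine hcone.trans ?_
    nlinarith
  refine ⟨hconemem, ?_⟩
  -- part 2 : sparse approximation
  intro s hs
  obtain ⟨ℓt, hℓ0, hℓerr⟩ := stechkin v s hs
  refine ⟨ℓt, hℓ0, ?_⟩
  have hl1v : l1 v ≤ (1 + (1+ϑ)*KJx) * (Real.sqrt (J.card : ℝ) * l2 v) := by
    have h1 : l1 v = l1 (restr J v) + l1 (restr Jᶜ v) := l1_split J v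
    have h2 : l1 (restr Jᶜ v) ≤ ((1+ϑ)*KJx) * l1 (restr J v) := hconemem
    have h3 : l1 (restr J v) ≤ Real.sqrt (J.card : ℝ) * l2 v := by
      rw [l1_restr]; exact l1_le_sqrt_card_mul_l2 J v
    have h4 : 0 ≤ (1+ϑ)*KJx := by positivity
    nlinarith [l1_nonneg (restr J v)]
  have hspos : (0:ℝ) < Real.sqrt (s:ℝ) := Real.sqrt_pos.2 (by exact_mod_cast hs)
  refine hℓerr.trans ?_
  rw [Real.sqrt_div (by positivity : (0:ℝ) ≤ (J.card:ℝ)) (s:ℝ)]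
  calc l1 v / (2 * Real.sqrt (s:ℝ))
      ≤ ((1 + (1+ϑ)*KJx) * (Real.sqrt (J.card : ℝ) * l2 v)) / (2 * Real.sqrt (s:ℝ)) := by
        gcongr
  _ = (1 + (1+ϑ)*KJx) / 2 * (Real.sqrt (J.card:ℝ) / Real.sqrt (s:ℝ)) * l2 v := by
        field_simp
end
end

section
/- Expectation bound from a mixed sub-Gaussian/sub-exponential tail (Lemma E.5): let a ≥ √e and b, K > 0, and let Z be a random variable on a probability space with Z > 0 almost surely such that P(Z > t) ≤ a·exp(−b·min{t²/K², t/K}) for all t > 0. Then E[Z] ≤ 2K·√(log(a)/b) + K·log(a)/b + K/b. -/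
open MeasureTheory ProbabilityTheory Filter Finset Asymptotics
open scoped ENNReal NNReal Topology Classical

noncomputable section

lemma exp_int_Ioi' (r c : ℝ) (hr : 0 < r) :
    ∫ x in Set.Ioi c, Real.exp (-(r * x)) = Real.exp (-(r * c)) / r := by
  have h := MeasureTheory.integral_comp_mul_left_Ioi (fun x => Real.exp (-x)) c hr
  simp only [smul_eq_mul] at h
  rw [h, integral_exp_neg_Ioi]
  ring

lemma min_exp_tail_int' (A r T : ℝ) (hr : 0 < r) (hT : 0 < T)
    (hA1 : A * Real.exp (-(r * T)) = 1) :
    IntegrableOn (fun t => min 1 (A * Real.exp (-(r * t)))) (Set.Ioi 0) ∧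
    ∫ t in Set.Ioi 0, min 1 (A * Real.exp (-(r * t))) ≤ T + 1 / r := by
  have hA : 0 < A := by nlinarith [Real.exp_pos (-(r * T))]
  set f : ℝ → ℝ := fun t => min 1 (A * Real.exp (-(r * t))) with hf
  have hfnn : ∀ t, 0 ≤ f t := fun t => le_min zero_le_one (by positivity)
  have hcont : Continuous f := by fun_prop
  have hmaj_int : IntegrableOn (fun t => A * Real.exp (-(r * t))) (Set.Ioi T) := by
    have := (exp_neg_integrableOn_Ioi T hr).const_mul A
    simp only [neg_mul] at this; exact this
  have hfIoi : IntegrableOn f (Set.Ioi T) := by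
    refine hmaj_int.mono' hcont.aestronglyMeasurable ?_
    refine Filter.Eventually.of_forall fun t => ?_
    rw [Real.norm_eq_abs, abs_of_nonneg (hfnn t)]
    exact min_le_right _ _
  have hfIoc : IntegrableOn f (Set.Ioc 0 T) := hcont.integrableOn_Ioc
  have hfint : IntegrableOn f (Set.Ioi 0) := by
    rw [← Set.Ioc_union_Ioi_eq_Ioi hT.le]
    exact hfIoc.union hfIoi
  refine ⟨hfint, ?_⟩
  have hsplit : ∫ t in Set.Ioi 0, f t = (∫ t in Set.Ioc 0 T, f t) + ∫ t in Set.Ioi T, f t := by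
    rw [← setIntegral_union Set.Ioc_disjoint_Ioi_same measurableSet_Ioi hfIoc hfIoi,
      Set.Ioc_union_Ioi_eq_Ioi hT.le]
  have h1 : ∫ t in Set.Ioc 0 T, f t ≤ T := by
    have := setIntegral_mono_on hfIoc (integrableOn_const (by simp) (by simp))
      measurableSet_Ioc (fun x _ => min_le_left (1 : ℝ) _)
    simpa [Real.volume_Ioc, ENNReal.toReal_ofReal hT.le, max_eq_left hT.le] using this
  have h2 : ∫ t in Set.Ioi T, f t ≤ 1 / r := by
    have hm := setIntegral_mono_on hfIoi hmaj_int measurableSet_Ioi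
      (fun x _ => min_le_right (1 : ℝ) _)
    rw [MeasureTheory.integral_const_mul, exp_int_Ioi' r T hr] at hm
    calc ∫ t in Set.Ioi T, f t ≤ A * (Real.exp (-(r * T)) / r) := hm
      _ = (A * Real.exp (-(r * T))) / r := by ring
      _ = 1 / r := by rw [hA1]
  linarith [hsplit, h1, h2]

lemma min_gauss_tail_int' (A c T : ℝ) (hc : 0 < c) (hT : 0 < T)
    (hA1 : A * Real.exp (-(c * T ^ 2)) = 1) :
    IntegrableOn (fun t => min 1 (A * Real.exp (-(c * t ^ 2)))) (Set.Ioi 0) ∧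
    ∫ t in Set.Ioi 0, min 1 (A * Real.exp (-(c * t ^ 2))) ≤ T + 1 / (2 * c * T) := by
  have hA : 0 < A := by nlinarith [Real.exp_pos (-(c * T ^ 2))]
  set r : ℝ := 2 * c * T with hrdef
  have hr : 0 < r := by positivity
  set f : ℝ → ℝ := fun t => min 1 (A * Real.exp (-(c * t ^ 2))) with hf
  set maj : ℝ → ℝ := fun t => Real.exp (r * T) * Real.exp (-(r * t)) with hmaj
  have hfnn : ∀ t, 0 ≤ f t := fun t => le_min zero_le_one (by positivity)
  have hcont : Continuous f := by fun_prop
  have hkey : ∀ t, T ≤ t → A * Real.exp (-(c * t ^ 2)) ≤ maj t := by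
    intro t ht
    have h1 : Real.exp (-(c * t ^ 2)) ≤ Real.exp (-(c * T ^ 2) + (r * T - r * t)) := by
      apply Real.exp_le_exp.2
      have : 0 ≤ (t - T) ^ 2 := sq_nonneg _
      nlinarith
    calc A * Real.exp (-(c * t ^ 2)) ≤ A * Real.exp (-(c * T ^ 2) + (r * T - r * t)) :=
          mul_le_mul_of_nonneg_left h1 hA.le
      _ = (A * Real.exp (-(c * T ^ 2))) * (Real.exp (r * T) * Real.exp (-(r * t))) := by
          rw [show -(c * T ^ 2) + (r * T - r * t) = -(c * T ^ 2) + (r * T + -(r * t)) by ring,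
            Real.exp_add, Real.exp_add]
          ring
      _ = maj t := by rw [hA1, one_mul]
  have hmaj_int : IntegrableOn maj (Set.Ioi T) := by
    have := (exp_neg_integrableOn_Ioi T hr).const_mul (Real.exp (r * T))
    simp only [neg_mul] at this; exact this
  have hfIoi : IntegrableOn f (Set.Ioi T) := by
    refine hmaj_int.mono' hcont.aestronglyMeasurable ?_
    refine (ae_restrict_iff' measurableSet_Ioi).2 (Filter.Eventually.of_forall fun t ht => ?_)
    rw [Real.norm_eq_abs, abs_of_nonneg (hfnn t)]
    exact (min_le_right _ _).trans (hkey t (le_of_lt ht))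
  have hfIoc : IntegrableOn f (Set.Ioc 0 T) := hcont.integrableOn_Ioc
  have hfint : IntegrableOn f (Set.Ioi 0) := by
    rw [← Set.Ioc_union_Ioi_eq_Ioi hT.le]
    exact hfIoc.union hfIoi
  refine ⟨hfint, ?_⟩
  have hsplit : ∫ t in Set.Ioi 0, f t = (∫ t in Set.Ioc 0 T, f t) + ∫ t in Set.Ioi T, f t := by
    rw [← setIntegral_union Set.Ioc_disjoint_Ioi_same measurableSet_Ioi hfIoc hfIoi,
      Set.Ioc_union_Ioi_eq_Ioi hT.le]
  have h1 : ∫ t in Set.Ioc 0 T, f t ≤ T := by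
    have := setIntegral_mono_on hfIoc (integrableOn_const (by simp) (by simp))
      measurableSet_Ioc (fun x _ => min_le_left (1 : ℝ) _)
    simpa [Real.volume_Ioc, ENNReal.toReal_ofReal hT.le, max_eq_left hT.le] using this
  have h2 : ∫ t in Set.Ioi T, f t ≤ 1 / r := by
    have hm := setIntegral_mono_on hfIoi hmaj_int measurableSet_Ioi
      (fun x hx => (min_le_right (1 : ℝ) _).trans (hkey x (le_of_lt hx)))
    rw [show maj = fun t => Real.exp (r * T) * Real.exp (-(r * t)) from rfl] at hm
    rw [MeasureTheory.integral_const_mul, exp_int_Ioi' r T hr] at hm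
    have hexp : Real.exp (r * T) * Real.exp (-(r * T)) = 1 := by
      rw [← Real.exp_add]; simp
    calc ∫ t in Set.Ioi T, f t ≤ Real.exp (r * T) * (Real.exp (-(r * T)) / r) := hm
      _ = (Real.exp (r * T) * Real.exp (-(r * T))) / r := by ring
      _ = 1 / r := by rw [hexp]
  linarith [hsplit, h1, h2]

/-- expectation bound from a mixed sub-Gaussian/sub-exponential tail. -/
theorem expectation_bound_from_mixed_tail
    {Ω : Type*} [MeasurableSpace Ω] (μ : Measure Ω) [IsProbabilityMeasure μ]
    (a b K : ℝ) (ha : Real.sqrt (Real.exp 1) ≤ a) (hb : 0 < b) (hK : 0 < K)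
    (Z : Ω → ℝ) (hZmeas : Measurable Z) (hZpos : ∀ᵐ ω ∂μ, 0 < Z ω)
    (htail : ∀ t : ℝ, 0 < t →
      μ {ω | t < Z ω} ≤ ENNReal.ofReal (a * Real.exp (-b * min (t ^ 2 / K ^ 2) (t / K)))) :
    ∫ ω, Z ω ∂μ ≤ 2 * K * Real.sqrt (Real.log a / b) + K * Real.log a / b + K / b := by
  set L : ℝ := Real.log a with hLdef
  have ha1 : (1:ℝ) ≤ a := by
    refine le_trans ?_ ha
    have h := Real.sqrt_le_sqrt (show (1:ℝ) ≤ Real.exp 1 from Real.one_le_exp zero_le_one)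
    simpa using h
  have ha0 : (0:ℝ) < a := lt_of_lt_of_le one_pos ha1
  have hL : (1:ℝ)/2 ≤ L := by
    have hh : Real.log (Real.sqrt (Real.exp 1)) = 1/2 := by
      rw [Real.log_sqrt (Real.exp_pos 1).le, Real.log_exp]
    rw [← hh]
    exact Real.log_le_log (Real.sqrt_pos.2 (Real.exp_pos 1)) ha
  have hLpos : (0:ℝ) < L := lt_of_lt_of_le (by norm_num) hL
  have haL : Real.exp L = a := Real.exp_log ha0
  have hbne : b ≠ 0 := hb.ne'
  have hKne : K ≠ 0 := hK.ne'
  set c1 : ℝ := b / K ^ 2 with hc1def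
  set r2 : ℝ := b / K with hr2def
  set s : ℝ := Real.sqrt (L / b) with hsdef
  have hs : 0 < s := Real.sqrt_pos.2 (by positivity)
  have hss : s * s = L / b := Real.mul_self_sqrt (by positivity)
  set T1 : ℝ := K * s with hT1def
  set T2 : ℝ := K * L / b with hT2def
  have hc1 : 0 < c1 := by positivity
  have hr2 : 0 < r2 := by positivity
  have hT1 : 0 < T1 := by positivity
  have hT2 : 0 < T2 := by positivity
  have hexpinv : Real.exp (-L) = a⁻¹ := by rw [Real.exp_neg, haL]
  have hA1g : a * Real.exp (-(c1 * T1 ^ 2)) = 1 := by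
    have harg : c1 * T1 ^ 2 = L := by
      have : T1 ^ 2 = K ^ 2 * (s * s) := by rw [hT1def]; ring
      rw [this, hss, hc1def]
      field_simp
    rw [harg, hexpinv, mul_inv_cancel₀ (ne_of_gt ha0)]
  have hA1e : a * Real.exp (-(r2 * T2)) = 1 := by
    have harg : r2 * T2 = L := by rw [hr2def, hT2def]; field_simp
    rw [harg, hexpinv, mul_inv_cancel₀ (ne_of_gt ha0)]
  obtain ⟨hint1, hI1⟩ := min_gauss_tail_int' a c1 T1 hc1 hT1 hA1g
  obtain ⟨hint2, hI2⟩ := min_exp_tail_int' a r2 T2 hr2 hT2 hA1e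
  -- bounds on the right-hand constants
  have hB1 : T1 + 1 / (2 * c1 * T1) ≤ 2 * K * s := by
    have hpos : 0 < 2 * c1 * T1 := by positivity
    have hprod : (2 * c1 * T1) * (K * s) = 2 * L := by
      have h1 : (2 * c1 * T1) * (K * s) = 2 * b * (s * s) := by
        rw [hc1def, hT1def]; field_simp
      rw [h1, hss]; field_simp
    have : 1 / (2 * c1 * T1) ≤ K * s := by
      rw [div_le_iff₀ hpos]
      nlinarith
    linarith [this]
  have hB2 : T2 + 1 / r2 = K * L / b + K / b := by
    rw [hr2def, one_div_div]
  -- pointwise tail bound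
  set g1 : ℝ → ℝ := fun t => min 1 (a * Real.exp (-(c1 * t ^ 2))) with hg1
  set g2 : ℝ → ℝ := fun t => min 1 (a * Real.exp (-(r2 * t))) with hg2
  have hg1nn : ∀ t, 0 ≤ g1 t := fun t => le_min zero_le_one (by positivity)
  have hg2nn : ∀ t, 0 ≤ g2 t := fun t => le_min zero_le_one (by positivity)
  have hpt : ∀ᵐ t ∂(volume.restrict (Set.Ioi (0:ℝ))),
      μ {ω | t < Z ω} ≤ ENNReal.ofReal (g1 t + g2 t) := by
    refine (ae_restrict_iff' measurableSet_Ioi).2 (Filter.Eventually.of_forall fun t ht => ?_)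
    have ht0 : (0:ℝ) < t := ht
    have h2 := htail t ht0
    have hreal : min 1 (a * Real.exp (-b * min (t ^ 2 / K ^ 2) (t / K))) ≤ g1 t + g2 t := by
      rcases min_cases (t ^ 2 / K ^ 2) (t / K) with ⟨hmin, _⟩ | ⟨hmin, _⟩
      · rw [hmin, show -b * (t ^ 2 / K ^ 2) = -(c1 * t ^ 2) by rw [hc1def]; ring]
        exact le_add_of_nonneg_right (hg2nn t)
      · rw [hmin, show -b * (t / K) = -(r2 * t) by rw [hr2def]; ring]
        exact le_add_of_nonneg_left (hg1nn t)
    have hmu : μ {ω | t < Z ω} ≤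
        ENNReal.ofReal (min 1 (a * Real.exp (-b * min (t ^ 2 / K ^ 2) (t / K)))) := by
      rcases le_total (a * Real.exp (-b * min (t ^ 2 / K ^ 2) (t / K))) 1 with h | h
      · rw [min_eq_right h]; exact h2
      · rw [min_eq_left h]
        simpa using (prob_le_one (μ := μ) (s := {ω | t < Z ω}))
    exact hmu.trans (ENNReal.ofReal_le_ofReal hreal)
  -- layer cake
  have hZae : 0 ≤ᵐ[μ] Z := hZpos.mono fun ω h => h.le
  have hlayer : ∫⁻ ω, ENNReal.ofReal (Z ω) ∂μ = ∫⁻ t in Set.Ioi 0, μ {ω | t < Z ω} :=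
    lintegral_eq_lintegral_meas_lt μ hZae hZmeas.aemeasurable
  have hGint : Integrable (fun t => g1 t + g2 t) (volume.restrict (Set.Ioi (0:ℝ))) :=
    hint1.add hint2
  have hGnn : 0 ≤ᵐ[volume.restrict (Set.Ioi (0:ℝ))] fun t => g1 t + g2 t :=
    Filter.Eventually.of_forall fun t => add_nonneg (hg1nn t) (hg2nn t)
  have heq : ∫⁻ t in Set.Ioi 0, ENNReal.ofReal (g1 t + g2 t) =
      ENNReal.ofReal (∫ t in Set.Ioi 0, (g1 t + g2 t)) :=
    (ofReal_integral_eq_lintegral_ofReal hGint hGnn).symm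
  have hsum : ∫ t in Set.Ioi 0, (g1 t + g2 t) =
      (∫ t in Set.Ioi 0, g1 t) + ∫ t in Set.Ioi 0, g2 t := integral_add hint1 hint2
  set C : ℝ := 2 * K * s + (K * L / b + K / b) with hCdef
  have hIC : ∫ t in Set.Ioi 0, (g1 t + g2 t) ≤ C := by
    rw [hsum]
    calc (∫ t in Set.Ioi 0, g1 t) + ∫ t in Set.Ioi 0, g2 t
        ≤ (T1 + 1 / (2 * c1 * T1)) + (T2 + 1 / r2) := add_le_add hI1 hI2
      _ ≤ 2 * K * s + (K * L / b + K / b) := by rw [← hB2]; linarith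
  have hlin : ∫⁻ ω, ENNReal.ofReal (Z ω) ∂μ ≤ ENNReal.ofReal C := by
    rw [hlayer]
    calc ∫⁻ t in Set.Ioi 0, μ {ω | t < Z ω}
        ≤ ∫⁻ t in Set.Ioi 0, ENNReal.ofReal (g1 t + g2 t) := lintegral_mono_ae hpt
      _ = ENNReal.ofReal (∫ t in Set.Ioi 0, (g1 t + g2 t)) := heq
      _ ≤ ENNReal.ofReal C := ENNReal.ofReal_le_ofReal hIC
  have hint : ∫ ω, Z ω ∂μ = (∫⁻ ω, ENNReal.ofReal (Z ω) ∂μ).toReal :=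
    integral_eq_lintegral_of_nonneg_ae hZae hZmeas.aestronglyMeasurable
  have hCnn : 0 ≤ C := by positivity
  calc ∫ ω, Z ω ∂μ = (∫⁻ ω, ENNReal.ofReal (Z ω) ∂μ).toReal := hint
    _ ≤ (ENNReal.ofReal C).toReal := ENNReal.toReal_mono ENNReal.ofReal_ne_top hlin
    _ = C := ENNReal.toReal_ofReal hCnn
    _ = 2 * K * Real.sqrt (Real.log a / b) + K * Real.log a / b + K / b := by
      rw [hCdef, hsdef, hLdef]; ring
end
end

section
/- Restricted cone and cross-polytope property of the dual minimizer (Lemma E.8): let n, d ≥ 1, a₀ > 1, γ, ν, κ > 0, r ∈ [0,1), x ∈ ℝ^d, X₁,…,Xₙ ∈ ℝ^d, and π̂₁,…,π̂ₙ ≥ 0. Let ℓ₀ ∈ ℝ^d satisfy ‖ℓ₀‖₂ ≤ 2‖x‖₂/κ², let S ⊆ {1,…,d}, and let ℓ̃ be the coordinate restriction of ℓ₀ to S (ℓ̃ₖ = (ℓ₀)ₖ for k ∈ S, ℓ̃ₖ = 0 otherwise) with ‖ℓ̃ − ℓ₀‖₂ ≤ r·‖ℓ₀‖₂. Let ℓ̂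 be a minimizer over ℓ ∈ ℝ^d of G(ℓ) := (1/(4n))Σᵢ₌₁ⁿ π̂ᵢ(Xᵢᵀℓ)² + xᵀℓ + (γ/n)‖ℓ‖₁. Assume: (i) ‖(1/(2n))Σᵢ₌₁ⁿ π̂ᵢ(Xᵢᵀℓ₀)Xᵢ + x‖∞ ≤ γ/(a₀n), and (ii) (1/n)Σᵢ₌₁ⁿ π̂ᵢ(Xᵢᵀ(ℓ̃ − ℓ₀))² ≤ ν·r²·‖ℓ₀‖₂²/(a₀n). Then ‖(ℓ̂ − ℓ̃)_{S^c}‖₁ ≤ (r²·‖x‖₂²/((a₀−1)·κ⁴))·(ν/γ) + ((a₀+1)/(a₀−1))·‖(ℓ̂ − ℓ̃)_S‖₁; in particular, either ℓ̂ − ℓ̃ ∈ C₁(S, 2(a₀+1)/(a₀−1)) or ‖ℓ̂ − ℓ̃‖₁ ≤ ((a₀²+1)·r²·‖x‖₂²/((a₀−1)·κ⁴))·(ν/γ). -/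
open MeasureTheory ProbabilityTheory Filter Finset Asymptotics
open scoped ENNReal NNReal Topology Classical

noncomputable section

set_option maxHeartbeats 2000000 in
/-- restricted cone and cross-polytope property of the dual minimizer. -/
theorem restricted_cone_and_cross_polytope
    (n d : ℕ) (hn : 1 ≤ n) (hd : 1 ≤ d) (a₀ γ ν κ r : ℝ)
    (ha₀ : 1 < a₀) (hγ : 0 < γ) (hν : 0 < ν) (hκ : 0 < κ) (hr0 : 0 ≤ r) (hr1 : r < 1)
    (x : Fin d → ℝ) (X : Fin n → Fin d → ℝ) (piHat : Fin n → ℝ) (hpi : ∀ i, 0 ≤ piHat i)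
    (ℓ₀ : Fin d → ℝ) (hℓ₀ : l2 ℓ₀ ≤ 2 * l2 x / κ ^ 2)
    (S : Finset (Fin d)) (ℓt : Fin d → ℝ) (hℓt : ℓt = restr S ℓ₀)
    (happrox : l2 (fun j => ℓt j - ℓ₀ j) ≤ r * l2 ℓ₀)
    (ℓHat : Fin d → ℝ)
    (hmin : ∀ ℓ : Fin d → ℝ,
      (1 / (4 * n)) * ∑ i, piHat i * dot (X i) ℓHat ^ 2 + dot x ℓHat + (γ / n) * l1 ℓHat
        ≤ (1 / (4 * n)) * ∑ i, piHat i * dot (X i) ℓ ^ 2 + dot x ℓ + (γ / n) * l1 ℓ)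
    (hi : linf (fun j => (1 / (2 * n)) * ∑ i, piHat i * dot (X i) ℓ₀ * X i j + x j)
        ≤ γ / (a₀ * n))
    (hii : (1 / (n : ℝ)) * ∑ i, piHat i * dot (X i) (fun j => ℓt j - ℓ₀ j) ^ 2
        ≤ ν * r ^ 2 * l2 ℓ₀ ^ 2 / (a₀ * n)) :
    l1 (restr Sᶜ (fun j => ℓHat j - ℓt j))
      ≤ (r ^ 2 * l2 x ^ 2 / ((a₀ - 1) * κ ^ 4)) * (ν / γ)
        + ((a₀ + 1) / (a₀ - 1)) * l1 (restr S (fun j => ℓHat j - ℓt j)) ∧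
    ((fun j => ℓHat j - ℓt j) ∈ cone1 S (2 * (a₀ + 1) / (a₀ - 1)) ∨
      l1 (fun j => ℓHat j - ℓt j)
        ≤ ((a₀ ^ 2 + 1) * r ^ 2 * l2 x ^ 2 / ((a₀ - 1) * κ ^ 4)) * (ν / γ)) := by
  
  classical
  have hN : (0:ℝ) < (n:ℝ) := by exact_mod_cast Nat.lt_of_lt_of_le Nat.zero_lt_one hn
  have hN0 : ((n:ℝ)) ≠ 0 := ne_of_gt hN
  have ha₀pos : (0:ℝ) < a₀ := lt_trans one_pos ha₀
  have ha₀0 : a₀ ≠ 0 := ne_of_gt ha₀pos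
  have ha₀1 : (0:ℝ) < a₀ - 1 := sub_pos.mpr ha₀
  set w : Fin d → ℝ := fun j => ℓt j - ℓ₀ j with hwdef
  set v : Fin d → ℝ := fun j => ℓHat j - ℓt j with hvdef
  -- linearity facts for dot
  have hdots : ∀ u : Fin d → ℝ, dot u ℓHat = dot u ℓt + dot u v := by
    intro u
    simp only [dot, hvdef, ← Finset.sum_add_distrib]
    exact Finset.sum_congr rfl fun j _ => by ring
  have hdott : ∀ u : Fin d → ℝ, dot u ℓt = dot u ℓ₀ + dot u w := by
    intro u
    simp only [dot, hwdef, ← Finset.sum_add_distrib]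
    exact Finset.sum_congr rfl fun j _ => by ring
  -- per-coordinate quadratic expansion inequality
  have key_i : ∀ i : Fin n,
      piHat i * dot (X i) ℓt ^ 2 +
        (2 * (piHat i * dot (X i) ℓ₀ * dot (X i) v) - piHat i * dot (X i) w ^ 2)
        ≤ piHat i * dot (X i) ℓHat ^ 2 := by
    intro i
    rw [hdots (X i), hdott (X i)]
    nlinarith [mul_nonneg (hpi i) (sq_nonneg (dot (X i) w + dot (X i) v))]
  have hsum : (∑ i, piHat i * dot (X i) ℓt ^ 2) +
      (2 * (∑ i, piHat i * dot (X i) ℓ₀ * dot (X i) v) -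
        ∑ i, piHat i * dot (X i) w ^ 2)
      ≤ ∑ i, piHat i * dot (X i) ℓHat ^ 2 := by
    have := Finset.sum_le_sum (fun i (_ : i ∈ Finset.univ) => key_i i)
    simpa [Finset.sum_add_distrib, Finset.sum_sub_distrib, Finset.mul_sum] using this
  -- basic inequality from minimality at ℓt
  have hbasic := hmin ℓt
  rw [hdots x] at hbasic
  set SAC : ℝ := ∑ i, piHat i * dot (X i) ℓ₀ * dot (X i) v with hSACdef
  set SB2 : ℝ := ∑ i, piHat i * dot (X i) w ^ 2 with hSB2def
  have hstep : (1 / (2 * (n:ℝ))) * SAC - (1 / (4 * (n:ℝ))) * SB2 + dot x v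
      + (γ / (n:ℝ)) * l1 ℓHat - (γ / (n:ℝ)) * l1 ℓt ≤ 0 := by
    have hm := mul_le_mul_of_nonneg_left hsum
      (by positivity : (0:ℝ) ≤ 1 / (4 * (n:ℝ)))
    have e : (1 / (4 * (n:ℝ))) * ((∑ i, piHat i * dot (X i) ℓt ^ 2) + (2 * SAC - SB2))
        = (1 / (4 * (n:ℝ))) * (∑ i, piHat i * dot (X i) ℓt ^ 2)
          + ((1 / (2 * (n:ℝ))) * SAC - (1 / (4 * (n:ℝ))) * SB2) := by ring
    rw [e] at hm
    linarith
  -- sum swap: SAC as a dot product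
  have hswap : SAC = ∑ j, (∑ i, piHat i * dot (X i) ℓ₀ * X i j) * v j := by
    rw [hSACdef]
    calc ∑ i, piHat i * dot (X i) ℓ₀ * dot (X i) v
        = ∑ i, ∑ j, piHat i * dot (X i) ℓ₀ * X i j * v j := by
          refine Finset.sum_congr rfl fun i _ => ?_
          rw [show dot (X i) v = ∑ j, X i j * v j from rfl, Finset.mul_sum]
          exact Finset.sum_congr rfl fun j _ => by ring
      _ = ∑ j, ∑ i, piHat i * dot (X i) ℓ₀ * X i j * v j := Finset.sum_comm
      _ = ∑ j, (∑ i, piHat i * dot (X i) ℓ₀ * X i j) * v j := by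
          exact Finset.sum_congr rfl fun j _ => (Finset.sum_mul _ _ _).symm
  -- Hölder bound on the linear term
  have hg : ∀ j, |(1 / (2 * (n:ℝ))) * (∑ i, piHat i * dot (X i) ℓ₀ * X i j) + x j|
      ≤ γ / (a₀ * (n:ℝ)) := by
    intro j
    refine le_trans ?_ hi
    simp only [linf]
    exact le_ciSup (f := fun j => |(1 / (2 * (n:ℝ))) *
        (∑ i, piHat i * dot (X i) ℓ₀ * X i j) + x j|)
      ((Set.finite_range _).bddAbove) j
  have hlin : -((γ / (a₀ * (n:ℝ))) * l1 v) ≤ (1 / (2 * (n:ℝ))) * SAC + dot x v := by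
    have heq : (1 / (2 * (n:ℝ))) * SAC + dot x v
        = ∑ j, ((1 / (2 * (n:ℝ))) * (∑ i, piHat i * dot (X i) ℓ₀ * X i j) + x j) * v j := by
      rw [hswap, Finset.mul_sum, show dot x v = ∑ j, x j * v j from rfl,
        ← Finset.sum_add_distrib]
      exact Finset.sum_congr rfl fun j _ => by ring
    rw [heq]
    have : -((γ / (a₀ * (n:ℝ))) * l1 v)
        = ∑ j, -((γ / (a₀ * (n:ℝ))) * |v j|) := by
      simp [l1, Finset.mul_sum]
    rw [this]
    refine Finset.sum_le_sum fun j _ => ?_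
    have h1 := hg j
    have h2 : -(((1 / (2 * (n:ℝ))) * (∑ i, piHat i * dot (X i) ℓ₀ * X i j) + x j) * v j)
        ≤ |(1 / (2 * (n:ℝ))) * (∑ i, piHat i * dot (X i) ℓ₀ * X i j) + x j| * |v j| := by
      rw [← abs_mul]; exact neg_le_abs _
    have h3 : |(1 / (2 * (n:ℝ))) * (∑ i, piHat i * dot (X i) ℓ₀ * X i j) + x j| * |v j|
        ≤ (γ / (a₀ * (n:ℝ))) * |v j| := mul_le_mul_of_nonneg_right h1 (abs_nonneg _)
    linarith
  -- bound on SB2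
  have hSB2 : SB2 ≤ ν * r ^ 2 * l2 ℓ₀ ^ 2 / a₀ := by
    have hm := mul_le_mul_of_nonneg_left hii (le_of_lt hN)
    have e1 : (n:ℝ) * ((1 / (n:ℝ)) * SB2) = SB2 := by field_simp
    have e2 : (n:ℝ) * (ν * r ^ 2 * l2 ℓ₀ ^ 2 / (a₀ * (n:ℝ)))
        = ν * r ^ 2 * l2 ℓ₀ ^ 2 / a₀ := by field_simp
    rw [e1, e2] at hm
    exact hm
  -- ℓ¹ decompositions
  set s : ℝ := l1 (restr S v) with hsdef
  set t : ℝ := l1 (restr Sᶜ v) with htdef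
  have hs0 : 0 ≤ s := by
    rw [hsdef, l1]; exact Finset.sum_nonneg fun j _ => abs_nonneg _
  have ht0 : 0 ≤ t := by
    rw [htdef, l1]; exact Finset.sum_nonneg fun j _ => abs_nonneg _
  have hl1split : l1 v = s + t := by
    rw [hsdef, htdef]
    simp only [l1, restr, ← Finset.sum_add_distrib]
    refine Finset.sum_congr rfl fun j _ => ?_
    by_cases hj : j ∈ S <;> simp [hj, Finset.mem_compl]
  have hl1lower : l1 ℓt - s + t ≤ l1 ℓHat := by
    rw [hsdef, htdef]
    simp only [l1, restr, ← Finset.sum_sub_distrib, ← Finset.sum_add_distrib]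
    refine Finset.sum_le_sum fun j _ => ?_
    have hvj : v j = ℓHat j - ℓt j := by rw [hvdef]
    by_cases hj : j ∈ S
    · rw [if_pos hj, if_neg (fun hmem => (Finset.mem_compl.mp hmem) hj)]
      have h1 : |ℓt j| - |ℓHat j| ≤ |ℓt j - ℓHat j| := abs_sub_abs_le_abs_sub _ _
      have h2 : |ℓt j - ℓHat j| = |v j| := by rw [hvj, abs_sub_comm]
      simp only [abs_zero]
      linarith
    · have hz : ℓt j = 0 := by rw [hℓt]; simp [restr, hj]
      rw [if_neg hj, if_pos (Finset.mem_compl.mpr hj), hz, hvj, hz]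
      simp
  -- the key scalar inequality
  have hkey : (γ / (n:ℝ)) * (t - s) ≤ (γ / (a₀ * (n:ℝ))) * (s + t)
      + (1 / (4 * (n:ℝ))) * (ν * r ^ 2 * l2 ℓ₀ ^ 2 / a₀) := by
    have hmono := mul_le_mul_of_nonneg_left hl1lower
      (by positivity : (0:ℝ) ≤ γ / (n:ℝ))
    have hSB2' := mul_le_mul_of_nonneg_left hSB2
      (by positivity : (0:ℝ) ≤ 1 / (4 * (n:ℝ)))
    rw [hl1split] at hlin
    nlinarith [hstep, hmono, hSB2', hlin]
  -- clear the denominator n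
  have hkey' : γ * (t - s) ≤ (γ / a₀) * (s + t) + ν * r ^ 2 * l2 ℓ₀ ^ 2 / (4 * a₀) := by
    have hm := mul_le_mul_of_nonneg_left hkey (le_of_lt hN)
    have e1 : (n:ℝ) * ((γ / (n:ℝ)) * (t - s)) = γ * (t - s) := by field_simp
    have e2 : (n:ℝ) * ((γ / (a₀ * (n:ℝ))) * (s + t)
        + (1 / (4 * (n:ℝ))) * (ν * r ^ 2 * l2 ℓ₀ ^ 2 / a₀))
        = (γ / a₀) * (s + t) + ν * r ^ 2 * l2 ℓ₀ ^ 2 / (4 * a₀) := by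
      field_simp
    rw [e1, e2] at hm
    exact hm
  -- clear the denominator a₀
  have hmaster : γ * ((a₀ - 1) * t) ≤ γ * ((a₀ + 1) * s) + ν * r ^ 2 * l2 ℓ₀ ^ 2 / 4 := by
    have hm := mul_le_mul_of_nonneg_left hkey' (le_of_lt ha₀pos)
    have e : a₀ * ((γ / a₀) * (s + t) + ν * r ^ 2 * l2 ℓ₀ ^ 2 / (4 * a₀))
        = γ * (s + t) + ν * r ^ 2 * l2 ℓ₀ ^ 2 / 4 := by field_simp
    rw [e] at hm
    nlinarith [hm]
  -- bound on l2 ℓ₀ squared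
  have hL0 : 0 ≤ l2 ℓ₀ := Real.sqrt_nonneg _
  have hLκ : l2 ℓ₀ * κ ^ 2 ≤ 2 * l2 x := (le_div_iff₀ (by positivity)).mp hℓ₀
  have hL2κ : l2 ℓ₀ ^ 2 * κ ^ 4 ≤ 4 * l2 x ^ 2 := by
    nlinarith [hLκ, mul_nonneg hL0 (by positivity : (0:ℝ) ≤ κ ^ 2)]
  -- first conjunct
  have goal1 : t ≤ (r ^ 2 * l2 x ^ 2 / ((a₀ - 1) * κ ^ 4)) * (ν / γ)
      + ((a₀ + 1) / (a₀ - 1)) * s := by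
    have hD : (0:ℝ) < (a₀ - 1) * κ ^ 4 * γ := by positivity
    rw [← mul_le_mul_iff_of_pos_right hD]
    have eR : ((r ^ 2 * l2 x ^ 2 / ((a₀ - 1) * κ ^ 4)) * (ν / γ)
        + ((a₀ + 1) / (a₀ - 1)) * s) * ((a₀ - 1) * κ ^ 4 * γ)
        = r ^ 2 * l2 x ^ 2 * ν + (a₀ + 1) * s * (κ ^ 4 * γ) := by
      field_simp
    rw [eR]
    have p1 := mul_le_mul_of_nonneg_right hmaster (by positivity : (0:ℝ) ≤ κ ^ 4)
    have p2 := mul_le_mul_of_nonneg_left hL2κ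
      (by positivity : (0:ℝ) ≤ ν * r ^ 2)
    nlinarith [p1, p2]
  refine ⟨goal1, ?_⟩
  by_cases hc : t ≤ 2 * (a₀ + 1) / (a₀ - 1) * s
  · exact Or.inl hc
  · right
    push_neg at hc
    rw [hl1split]
    set A : ℝ := (r ^ 2 * l2 x ^ 2 / ((a₀ - 1) * κ ^ 4)) * (ν / γ) with hAdef
    have hA : 0 ≤ A := by rw [hAdef]; positivity
    have eA : (a₀ ^ 2 + 1) * r ^ 2 * l2 x ^ 2 / ((a₀ - 1) * κ ^ 4) * (ν / γ)
        = (a₀ ^ 2 + 1) * A := by rw [hAdef]; ring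
    rw [eA]
    have hc1 : 2 * (a₀ + 1) * s < (a₀ - 1) * t := by
      rw [div_mul_eq_mul_div, div_lt_iff₀ ha₀1] at hc
      linarith
    have hg1 : (a₀ - 1) * t ≤ (a₀ - 1) * A + (a₀ + 1) * s := by
      have hm := mul_le_mul_of_nonneg_left goal1 (le_of_lt ha₀1)
      have e : (a₀ - 1) * (A + (a₀ + 1) / (a₀ - 1) * s)
          = (a₀ - 1) * A + (a₀ + 1) * s := by field_simp
      rw [e] at hm
      exact hm
    have hsA : (a₀ + 1) * s ≤ (a₀ - 1) * A := by linarith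
    have ht2A : t ≤ 2 * A := by nlinarith [hg1, hc1, ha₀1]
    have p1 : (a₀ + 1) * t ≤ (a₀ + 1) * (2 * A) :=
      mul_le_mul_of_nonneg_left ht2A (by linarith)
    have p2 : 0 ≤ A * (a₀ ^ 3 + a₀ ^ 2 - 2 * a₀) :=
      mul_nonneg hA (by nlinarith)
    have goal2 : (a₀ + 1) * (s + t) ≤ (a₀ + 1) * ((a₀ ^ 2 + 1) * A) := by nlinarith
    have := le_of_mul_le_mul_left goal2 (by linarith : (0:ℝ) < a₀ + 1)
    linarith
end
end

section
/- Orlicz norm of products of random variables (Lemma E.11): let α ∈ (0,2], let N ≥ 1 be an integer, and let X₁,…,X_N be real random variables on a common probability space with ‖Xᵢ‖_{ψ_α} < ∞ for each i. Then ‖∏ᵢ₌₁^N Xᵢ‖_{ψ_{α/N}} ≤ ∏ᵢ₌₁^N ‖Xᵢ‖_{ψ_α}. -/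
open MeasureTheory ProbabilityTheory Filter Finset Asymptotics
open scoped ENNReal NNReal Topology Classical

noncomputable section

private lemma prod_rpow_div_bound {N : ℕ} (hN : 1 ≤ N) (α : ℝ) (hα : 0 < α)
    (x s : Fin N → ℝ) (hs : ∀ i, 0 < s i) :
    |∏ i, x i| ^ (α / N) / (∏ i, s i) ^ (α / N) ≤
      ∑ i : Fin N, (1 / N : ℝ) * (|x i| ^ α / s i ^ α) := by
  have hNpos : (0 : ℝ) < N := by exact_mod_cast hN
  have hsprod : (0 : ℝ) < ∏ i, s i := Finset.prod_pos fun i _ => hs i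
  have hnn : ∀ i : Fin N, (0 : ℝ) ≤ |x i| / s i := fun i =>
    div_nonneg (abs_nonneg _) (hs i).le
  have h1 : |∏ i, x i| ^ (α / N) / (∏ i, s i) ^ (α / N)
      = ∏ i, ((|x i| / s i) ^ α) ^ ((1 : ℝ) / N) := by
    rw [← Real.div_rpow (abs_nonneg _) hsprod.le, Finset.abs_prod,
      ← Finset.prod_div_distrib,
      ← Real.finset_prod_rpow _ _ (fun i _ => hnn i) (α / N)]
    refine Finset.prod_congr rfl fun i _ => ?_
    rw [← Real.rpow_mul (hnn i), mul_one_div]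
  rw [h1]
  have hgm := Real.geom_mean_le_arith_mean_weighted Finset.univ
      (fun _ : Fin N => (1 / N : ℝ)) (fun i => (|x i| / s i) ^ α)
      (fun i _ => div_nonneg zero_le_one (Nat.cast_nonneg N))
      (by
        rw [Finset.sum_const, Finset.card_univ, Fintype.card_fin, nsmul_eq_mul]
        field_simp)
      (fun i _ => Real.rpow_nonneg (hnn i) _)
  refine hgm.trans_eq (Finset.sum_congr rfl fun i _ => ?_)
  show (1 / (N : ℝ)) * (|x i| / s i) ^ α = 1 / N * (|x i| ^ α / s i ^ α)
  rw [Real.div_rpow (abs_nonneg _) (hs i).le]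

private lemma key_integral {Ω : Type*} [MeasurableSpace Ω] (μ : Measure Ω)
    (α : ℝ) (hα : 0 < α) {N : ℕ} (hN : 1 ≤ N)
    (X : Fin N → Ω → ℝ) (hmeas : ∀ i, Measurable (X i))
    (s : Fin N → ℝ) (hs : ∀ i, 0 < s i)
    (hint : ∀ i, ∫⁻ ω, ENNReal.ofReal (Real.exp (|X i ω| ^ α / s i ^ α)) ∂μ ≤ 2) :
    ∫⁻ ω, ENNReal.ofReal
        (Real.exp (|∏ i, X i ω| ^ (α / N) / (∏ i, s i) ^ (α / N))) ∂μ ≤ 2 := by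
  have hNpos : (0 : ℝ) < N := by exact_mod_cast hN
  have hNne : (N : ℝ) ≠ 0 := hNpos.ne'
  have hwnn : (0 : ℝ) ≤ 1 / N := by positivity
  set f : Fin N → Ω → ℝ≥0∞ :=
    fun i ω => ENNReal.ofReal (Real.exp (|X i ω| ^ α / s i ^ α)) with hf
  have hfmeas : ∀ i, Measurable (f i) := by
    intro i
    apply ENNReal.measurable_ofReal.comp
    apply Real.measurable_exp.comp
    exact (((Real.continuous_rpow_const hα.le).measurable.comp (hmeas i).abs).div_const _)
  have step1 : ∀ ω, ENNReal.ofReal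
      (Real.exp (|∏ i, X i ω| ^ (α / N) / (∏ i, s i) ^ (α / N)))
      ≤ ∏ i, f i ω ^ ((1 : ℝ) / N) := by
    intro ω
    have hb : ∀ i : Fin N, (0 : ℝ) ≤ |X i ω| ^ α / s i ^ α := fun i => div_nonneg (Real.rpow_nonneg (abs_nonneg _) _) (Real.rpow_nonneg (hs i).le _)
    have heq : (∏ i, f i ω ^ ((1 : ℝ) / N)) =
        ENNReal.ofReal (Real.exp (∑ i, (1 / N : ℝ) * (|X i ω| ^ α / s i ^ α))) := by
      calc (∏ i, f i ω ^ ((1 : ℝ) / N))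
          = ∏ i, ENNReal.ofReal (Real.exp ((1 / N : ℝ) * (|X i ω| ^ α / s i ^ α))) := by
            refine Finset.prod_congr rfl fun i _ => ?_
            rw [hf, ENNReal.ofReal_rpow_of_nonneg (Real.exp_pos _).le hwnn]
            congr 1
            rw [Real.rpow_def_of_pos (Real.exp_pos _), Real.log_exp, mul_comm]
        _ = ENNReal.ofReal (Real.exp (∑ i, (1 / N : ℝ) * (|X i ω| ^ α / s i ^ α))) := by
            rw [Real.exp_sum, ENNReal.ofReal_prod_of_nonneg fun i _ => (Real.exp_pos _).le]
    rw [heq]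
    exact ENNReal.ofReal_le_ofReal (Real.exp_le_exp.mpr
      (prod_rpow_div_bound hN α hα (fun i => X i ω) s hs))
  calc ∫⁻ ω, ENNReal.ofReal
        (Real.exp (|∏ i, X i ω| ^ (α / N) / (∏ i, s i) ^ (α / N))) ∂μ
      ≤ ∫⁻ ω, ∏ i, f i ω ^ ((1 : ℝ) / N) ∂μ := lintegral_mono step1
    _ ≤ ∏ i, (∫⁻ ω, f i ω ∂μ) ^ ((1 : ℝ) / N) := by
        refine ENNReal.lintegral_prod_norm_pow_le _
          (fun i _ => (hfmeas i).aemeasurable) ?_ (fun i _ => hwnn)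
        rw [Finset.sum_const, Finset.card_univ, Fintype.card_fin, nsmul_eq_mul]
        field_simp
    _ ≤ ∏ _i : Fin N, (2 : ℝ≥0∞) ^ ((1 : ℝ) / N) := by
        exact Finset.prod_le_prod' fun i _ =>
          ENNReal.rpow_le_rpow (hint i) hwnn
    _ = 2 := by
        rw [Finset.prod_const, Finset.card_univ, Fintype.card_fin,
          ← ENNReal.rpow_natCast ((2 : ℝ≥0∞) ^ ((1 : ℝ) / N)) N,
          ← ENNReal.rpow_mul]
        rw [show (1 / N : ℝ) * N = 1 by field_simp]
        exact ENNReal.rpow_one 2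

/-- Orlicz norm of products of random variables. -/
theorem orlicz_norm_of_products
    {Ω : Type*} [MeasurableSpace Ω] (μ : Measure Ω) [IsProbabilityMeasure μ]
    (α : ℝ) (hα : α ∈ Set.Ioc (0 : ℝ) 2) (N : ℕ) (hN : 1 ≤ N)
    (X : Fin N → Ω → ℝ) (hmeas : ∀ i, Measurable (X i))
    (hfin : ∀ i, psiNorm α μ (X i) < ∞) :
    psiNorm (α / N) μ (fun ω => ∏ i, X i ω) ≤ ∏ i, psiNorm α μ (X i) := by
  obtain ⟨hα0, _⟩ := hα
  set n : Fin N → ℝ := fun i => (psiNorm α μ (X i)).toReal with hn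
  have hnnn : ∀ i, 0 ≤ n i := fun i => ENNReal.toReal_nonneg
  -- main bound for every positive real δ
  have hmain : ∀ δ : ℝ, 0 < δ →
      psiNorm (α / N) μ (fun ω => ∏ i, X i ω)
        ≤ ENNReal.ofReal (∏ i, (n i + δ)) := by
    intro δ hδ
    have hlt : ∀ i : Fin N,
        ∃ t ∈ {t : ℝ≥0∞ | 0 < t ∧ t ≠ ∞ ∧
          ∫⁻ ω, ENNReal.ofReal (Real.exp (|X i ω| ^ α / t.toReal ^ α)) ∂μ ≤ 2},
          t < psiNorm α μ (X i) + ENNReal.ofReal δ := by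
      intro i
      apply sInf_lt_iff.mp
      calc sInf _ = psiNorm α μ (X i) := rfl
        _ < psiNorm α μ (X i) + ENNReal.ofReal δ :=
          ENNReal.lt_add_right (hfin i).ne (by simpa using hδ)
    choose t ht htlt using hlt
    set s : Fin N → ℝ := fun i => (t i).toReal with hsdef
    have hspos : ∀ i, 0 < s i := fun i =>
      ENNReal.toReal_pos (ht i).1.ne' (ht i).2.1
    have hint : ∀ i, ∫⁻ ω, ENNReal.ofReal
        (Real.exp (|X i ω| ^ α / s i ^ α)) ∂μ ≤ 2 := fun i => (ht i).2.2
    have hkey := key_integral μ α hα0 hN X hmeas s hspos hint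
    have hsprod : (0 : ℝ) < ∏ i, s i := Finset.prod_pos fun i _ => hspos i
    have hmem : ENNReal.ofReal (∏ i, s i) ∈
        {u : ℝ≥0∞ | 0 < u ∧ u ≠ ∞ ∧
          ∫⁻ ω, ENNReal.ofReal
            (Real.exp (|∏ i, X i ω| ^ (α / N) / u.toReal ^ (α / N))) ∂μ ≤ 2} := by
      refine ⟨by simpa using hsprod, ENNReal.ofReal_ne_top, ?_⟩
      rwa [ENNReal.toReal_ofReal hsprod.le]
    have h1 : psiNorm (α / N) μ (fun ω => ∏ i, X i ω)
        ≤ ENNReal.ofReal (∏ i, s i) := sInf_le hmem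
    refine h1.trans ?_
    apply ENNReal.ofReal_le_ofReal
    refine Finset.prod_le_prod (fun i _ => (hspos i).le) fun i _ => ?_
    have : t i ≤ psiNorm α μ (X i) + ENNReal.ofReal δ := (htlt i).le
    have h2 : s i ≤ (psiNorm α μ (X i) + ENNReal.ofReal δ).toReal :=
      ENNReal.toReal_mono (by simp [ENNReal.add_ne_top, (hfin i).ne]) this
    refine h2.trans ?_
    rw [ENNReal.toReal_add (hfin i).ne ENNReal.ofReal_ne_top,
      ENNReal.toReal_ofReal hδ.le]
  -- pass to the limit δ → 0⁺
  have htend : Tendsto (fun δ : ℝ => ENNReal.ofReal (∏ i, (n i + δ)))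
      (𝓝[>] (0 : ℝ)) (𝓝 (ENNReal.ofReal (∏ i, n i))) := by
    have hcont : Continuous fun δ : ℝ => ∏ i, (n i + δ) := by
      exact continuous_finset_prod _ fun i _ => continuous_const.add continuous_id
    have := (ENNReal.continuous_ofReal.comp hcont).tendsto 0
    simpa [Function.comp_def] using this.mono_left nhdsWithin_le_nhds
  have hle : psiNorm (α / N) μ (fun ω => ∏ i, X i ω)
      ≤ ENNReal.ofReal (∏ i, n i) := by
    refine ge_of_tendsto htend ?_
    exact eventually_nhdsWithin_of_forall fun δ hδ => hmain δ hδ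
  refine hle.trans_eq ?_
  rw [ENNReal.ofReal_prod_of_nonneg fun i _ => hnnn i]
  exact Finset.prod_congr rfl fun i _ => ENNReal.ofReal_toReal (hfin i).ne
end
end
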